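/- (Proposition 1) Under the full-population Bernoulli design with treatment probability π, the expectation of the Horvitz–Thompson estimator built from Y satisfies E[τ̂¹(π)] = (1/n) Σ_{i ≠ j} (γ_{i,j} + π ζ_{i,j}). -/

import Mathlib

open Finset

noncomputable section

/-- Real-valued indicator of a Boolean. -/
def ind (b : Bool) : ℝ := if b then 1 else 0

/-- Dyadic linear potential-outcome model for an ordered pair `(i, j)`:
`z_{i,j}(W) = α_{i,j} + β_{i,j} W_i + γ_{i,j} W_j + ζ_{i,j} W_i W_j`. -/
def zDyad {n : ℕ} (α β γ ζ : Fin n → Fin n → ℝ) (W : Fin n → ℝ) (i j : Fin n) : ℝ :=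
  α i j + β i j * W i + γ i j * W j + ζ i j * W i * W j

/-- Upstream-aggregated outcome `Y_j(W) = Σ_{i ≠ j} z_{i,j}(W)`. -/
def Yagg {n : ℕ} (α β γ ζ : Fin n → Fin n → ℝ) (W : Fin n → ℝ) (j : Fin n) : ℝ :=
  ∑ i ∈ ({j}ᶜ : Finset (Fin n)), zDyad α β γ ζ W i j

/-- Downstream-aggregated outcome (diffusion metric) `D_j(W) = Σ_{i ≠ j} z_{j,i}(W)`. -/
def Dagg {n : ℕ} (α β γ ζ : Fin n → Fin n → ℝ) (W : Fin n → ℝ) (j : Fin n) : ℝ :=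
  ∑ i ∈ ({j}ᶜ : Finset (Fin n)), zDyad α β γ ζ W j i

/-- Expectation over `n` i.i.d. Bernoulli(`q`) treatment assignments: the weighted sum
over all assignment vectors `w ∈ {0,1}^n` with product Bernoulli weights. -/
def expectBern (n : ℕ) (q : ℝ) (f : (Fin n → Bool) → ℝ) : ℝ :=
  ∑ w : Fin n → Bool, (∏ i, if w i then q else 1 - q) * f w

/-- Horvitz–Thompson estimator built from `Y`:
`τ̂¹(q)(w) = (1/n) Σ_i [w_i Y_i(w)/q − (1 − w_i) Y_i(w)/(1 − q)]`. -/
def tauHat1 {n : ℕ} (α β γ ζ : Fin n → Fin n → ℝ) (q : ℝ) (w : Fin n → Bool) : ℝ :=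
  (1 / (n : ℝ)) * ∑ i,
    (ind (w i) * Yagg α β γ ζ (fun k => ind (w k)) i / q -
      (1 - ind (w i)) * Yagg α β γ ζ (fun k => ind (w k)) i / (1 - q))

/-- Horvitz–Thompson estimator built from the diffusion metric `D`:
`τ̂²(q)(w) = (1/n) Σ_i [w_i D_i(w)/q − (1 − w_i) D_i(w)/(1 − q)]`. -/
def tauHat2 {n : ℕ} (α β γ ζ : Fin n → Fin n → ℝ) (q : ℝ) (w : Fin n → Bool) : ℝ :=
  (1 / (n : ℝ)) * ∑ i,
    (ind (w i) * Dagg α β γ ζ (fun k => ind (w k)) i / q -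
      (1 - ind (w i)) * Dagg α β γ ζ (fun k => ind (w k)) i / (1 - q))


/-- Expectation of a product over coordinates factorizes. -/
lemma expect_prod (n : ℕ) (q : ℝ) (g : Fin n → Bool → ℝ) :
    expectBern n q (fun w => ∏ k, g k (w k)) =
      ∏ k, (q * g k true + (1 - q) * g k false) := by
  unfold expectBern
  have h : ∀ k : Fin n, q * g k true + (1 - q) * g k false
      = ∑ b : Bool, (if b then q else 1 - q) * g k b := by
    intro k; simp [Fintype.sum_bool]
  calc ∑ w : Fin n → Bool, (∏ i, if w i then q else 1 - q) * ∏ k, g k (w k)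
      = ∑ w : Fin n → Bool, ∏ k, ((if w k then q else 1 - q) * g k (w k)) := by
        refine Finset.sum_congr rfl fun w _ => ?_
        rw [Finset.prod_mul_distrib]
    _ = ∑ w ∈ Fintype.piFinset (fun _ : Fin n => (Finset.univ : Finset Bool)),
          ∏ k, ((if w k then q else 1 - q) * g k (w k)) := by
        rw [Fintype.piFinset_univ]
    _ = ∏ k, ∑ b : Bool, (if b then q else 1 - q) * g k b := by
        exact (Finset.prod_univ_sum (fun _ => (Finset.univ : Finset Bool))
          (fun k b => (if b then q else 1 - q) * g k b)).symm
    _ = ∏ k, (q * g k true + (1 - q) * g k false) := by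
        refine Finset.prod_congr rfl fun k _ => (h k).symm

lemma prod_if_two {n : ℕ} (i j : Fin n) (hij : i ≠ j) (A B : Fin n → ℝ) :
    (∏ k, (if k = i then A k else if k = j then B k else 1)) = A i * B j := by
  have hj : j ∈ (Finset.univ : Finset (Fin n)).erase i := by
    simp [Ne.symm hij]
  rw [← Finset.mul_prod_erase _ _ (Finset.mem_univ i),
      ← Finset.mul_prod_erase _ _ hj]
  have h1 : (if i = i then A i else if i = j then B i else 1) = A i := by simp
  have h2 : (if j = i then A j else if j = j then B j else 1) = B j := by
    simp [Ne.symm hij]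
  rw [h1, h2]
  have h3 : ∏ k ∈ (((Finset.univ : Finset (Fin n)).erase i).erase j),
      (if k = i then A k else if k = j then B k else 1) = 1 := by
    refine Finset.prod_eq_one fun k hk => ?_
    have hki : k ≠ i := Finset.ne_of_mem_erase (Finset.mem_of_mem_erase hk)
    have hkj : k ≠ j := Finset.ne_of_mem_erase hk
    simp [hki, hkj]
  rw [h3]; ring

/-- Expectation of a product of functions of two distinct coordinates. -/
lemma expect_pair (n : ℕ) (q : ℝ) (i j : Fin n) (hij : i ≠ j) (u v : Bool → ℝ) :
    expectBern n q (fun w => u (w i) * v (w j)) =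
      (q * u true + (1 - q) * u false) * (q * v true + (1 - q) * v false) := by
  have key : expectBern n q
      (fun w => ∏ k, (fun b => if k = i then u b else if k = j then v b else 1) (w k)) =
      ∏ k, (q * (if k = i then u true else if k = j then v true else 1)
        + (1 - q) * (if k = i then u false else if k = j then v false else 1)) :=
    expect_prod n q (fun k b => if k = i then u b else if k = j then v b else 1)
  have lhs_eq : (fun w : Fin n → Bool =>
      ∏ k, (fun b => if k = i then u b else if k = j then v b else 1) (w k)) =
      fun w => u (w i) * v (w j) := by
    funext w
    exact prod_if_two i j hij (fun k => u (w k)) (fun k => v (w k))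
  have rhs_eq : (∏ k, (q * (if k = i then u true else if k = j then v true else 1)
        + (1 - q) * (if k = i then u false else if k = j then v false else 1))) =
      (q * u true + (1 - q) * u false) * (q * v true + (1 - q) * v false) := by
    have := prod_if_two i j hij (fun _ => q * u true + (1 - q) * u false)
      (fun _ => q * v true + (1 - q) * v false)
    rw [← this]
    refine Finset.prod_congr rfl fun k _ => ?_
    by_cases hki : k = i
    · simp [hki]
    · by_cases hkj : k = j
      · simp [hki, hkj, Ne.symm hij]
      · simp [hki, hkj]
  rw [lhs_eq, rhs_eq] at key
  exact key

lemma expectBern_add (n : ℕ) (q : ℝ) (f g : (Fin n → Bool) → ℝ) :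
    expectBern n q (fun w => f w + g w) = expectBern n q f + expectBern n q g := by
  unfold expectBern
  rw [← Finset.sum_add_distrib]
  exact Finset.sum_congr rfl fun w _ => by ring

lemma expectBern_const_mul (n : ℕ) (q : ℝ) (c : ℝ) (f : (Fin n → Bool) → ℝ) :
    expectBern n q (fun w => c * f w) = c * expectBern n q f := by
  unfold expectBern
  rw [Finset.mul_sum]
  exact Finset.sum_congr rfl fun w _ => by ring

lemma expectBern_sum (n : ℕ) (q : ℝ) {ι : Type*} (s : Finset ι)
    (f : ι → (Fin n → Bool) → ℝ) :
    expectBern n q (fun w => ∑ j ∈ s, f j w) = ∑ j ∈ s, expectBern n q (f j) := by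
  unfold expectBern
  have h : ∀ w : Fin n → Bool, (∏ i, if w i then q else 1 - q) * ∑ j ∈ s, f j w
      = ∑ j ∈ s, (∏ i, if w i then q else 1 - q) * f j w := fun w => Finset.mul_sum _ _ _
  simp_rw [h]
  exact Finset.sum_comm

/-- Per-pair expectation computation. -/
lemma expect_pair_term (n : ℕ) (q : ℝ) (hq0 : 0 < q) (hq1 : q < 1)
    (i j : Fin n) (hij : i ≠ j) (a b c d : ℝ) :
    expectBern n q (fun w =>
      (ind (w j) / q - (1 - ind (w j)) / (1 - q)) *
        (a + b * ind (w i) + c * ind (w j) + d * ind (w i) * ind (w j))) =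
      c + q * d := by
  have hq0' : q ≠ 0 := ne_of_gt hq0
  have hq1' : (1 : ℝ) - q ≠ 0 := by linarith
  have e1 := expect_pair n q i j hij (fun x => a + b * ind x)
    (fun y => ind y / q - (1 - ind y) / (1 - q))
  have e2 := expect_pair n q i j hij (fun x => c + d * ind x)
    (fun y => ind y * (ind y / q - (1 - ind y) / (1 - q)))
  have split : (fun w : Fin n → Bool =>
      (ind (w j) / q - (1 - ind (w j)) / (1 - q)) *
        (a + b * ind (w i) + c * ind (w j) + d * ind (w i) * ind (w j))) =
      fun w => (fun x => a + b * ind x) (w i) *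
          (fun y => ind y / q - (1 - ind y) / (1 - q)) (w j) +
        (fun x => c + d * ind x) (w i) *
          (fun y => ind y * (ind y / q - (1 - ind y) / (1 - q))) (w j) := by
    funext w; simp only []; ring
  rw [split, expectBern_add, e1, e2]
  simp only [ind, if_true, if_false, Bool.false_eq_true, ↓reduceIte]
  field_simp
  ring

/-- Proposition 1: Under the full-population Bernoulli design with
treatment probability `q`, `E[τ̂¹(q)] = (1/n) Σ_{i ≠ j} (γ_{i,j} + q ζ_{i,j})`. -/
theorem expect_tauHat1
    (n : ℕ) (hn : 1 ≤ n) (α β γ ζ : Fin n → Fin n → ℝ)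
    (q : ℝ) (hq0 : 0 < q) (hq1 : q < 1) :
    expectBern n q (tauHat1 α β γ ζ q) =
      (1 / (n : ℝ)) * ∑ j, ∑ i ∈ ({j}ᶜ : Finset (Fin n)), (γ i j + q * ζ i j) := by
  have hq0' : q ≠ 0 := ne_of_gt hq0
  have hq1' : (1 : ℝ) - q ≠ 0 := by linarith
  have expand : tauHat1 α β γ ζ q = fun w =>
      ∑ j, ∑ i ∈ ({j}ᶜ : Finset (Fin n)),
        (1 / (n : ℝ)) * ((ind (w j) / q - (1 - ind (w j)) / (1 - q)) *
          (α i j + β i j * ind (w i) + γ i j * ind (w j)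
            + ζ i j * ind (w i) * ind (w j))) := by
    funext w
    unfold tauHat1 Yagg zDyad
    rw [Finset.mul_sum]
    refine Finset.sum_congr rfl fun j _ => ?_
    rw [Finset.mul_sum, Finset.mul_sum, Finset.sum_div, Finset.sum_div,
      ← Finset.sum_sub_distrib, Finset.mul_sum]
    refine Finset.sum_congr rfl fun i _ => ?_
    field_simp
  rw [expand, expectBern_sum, Finset.mul_sum]
  refine Finset.sum_congr rfl fun j _ => ?_
  rw [expectBern_sum, Finset.mul_sum]
  refine Finset.sum_congr rfl fun i hi => ?_
  have hij : i ≠ j := by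
    simpa [Finset.mem_compl] using hi
  rw [expectBern_const_mul, expect_pair_term n q hq0 hq1 i j hij]
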